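/- Let a < 0 and b > 0 be integers with b prime and (a/b) = -1. Then for all integers t and u, the integer d = a·u² + b·(1 - a·t²) is not a perfect square in ℤ. -/
import Mathlib


/-- If a < 0, b > 0 with b prime and (a/b) = -1, then for all integers t, u the
integer a u² + b (1 - a t²) is not a perfect square. -/
theorem pell_coefficient_not_square
    (a : ℤ) (hneg : a < 0)
    (b : ℕ) (hbpos : 0 < b) (hb : b.Prime) (hab : @legendreSym b ⟨hb⟩ a = -1)
    (t u : ℤ) :
    ¬ IsSquare (a * u ^ 2 + (b : ℤ) * (1 - a * t ^ 2)) := by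
  haveI : Fact b.Prime := ⟨hb⟩
  have hns : ¬ IsSquare (a : ZMod b) := (legendreSym.eq_neg_one_iff b).mp hab
  rintro ⟨s, hs⟩
  have hz : (a : ZMod b) * (u : ZMod b) ^ 2 = (s : ZMod b) * (s : ZMod b) := by
    have := congrArg (fun x : ℤ => (x : ZMod b)) hs
    push_cast at this
    simpa [ZMod.natCast_self] using this
  by_cases hu : (u : ZMod b) = 0
  · -- then s ≡ 0 mod b
    have hs0 : (s : ZMod b) = 0 := by
      have : (s : ZMod b) * (s : ZMod b) = 0 := by rw [← hz, hu]; ring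
      exact (mul_self_eq_zero).mp this
    obtain ⟨u₁, hu₁⟩ := (ZMod.intCast_zmod_eq_zero_iff_dvd u b).mp hu
    obtain ⟨s₁, hs₁⟩ := (ZMod.intCast_zmod_eq_zero_iff_dvd s b).mp hs0
    rw [hu₁, hs₁] at hs
    have hbne : (b : ℤ) ≠ 0 := by exact_mod_cast hbpos.ne'
    have key : a * (b : ℤ) * u₁ ^ 2 + (1 - a * t ^ 2) = (b : ℤ) * (s₁ * s₁) := by
      apply mul_left_cancel₀ hbne
      ring_nf
      ring_nf at hs
      linarith [hs]
    have hz2 : (1 : ZMod b) - (a : ZMod b) * (t : ZMod b) ^ 2 = 0 := by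
      have := congrArg (fun x : ℤ => (x : ZMod b)) key
      push_cast at this
      simpa [ZMod.natCast_self] using this
    have hat : (a : ZMod b) * (t : ZMod b) ^ 2 = 1 := by
      have := sub_eq_zero.mp hz2
      linear_combination -this
    have ht : (t : ZMod b) ≠ 0 := by
      intro h
      rw [h] at hat
      simp at hat
    apply hns
    refine ⟨(t : ZMod b)⁻¹, ?_⟩
    field_simp
    linear_combination hat
  · apply hns
    refine ⟨(s : ZMod b) * (u : ZMod b)⁻¹, ?_⟩
    field_simp
    linear_combination hz
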